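/- Let f̃ : ℝ^p → ℝ be convex, ρ-strongly convex on a ball containing both θ̂ and θ⁺, where θ̂ is the global minimizer of f̃ and θ⁺ = prox_{λ⁻¹f̃}(θ_t) for some θ_t and λ > 0. Then ‖θ⁺ − θ̂‖_2 ≤ (λ/(ρ+λ)) ‖θ_t − θ̂‖_2. -/
import Mathlib


open scoped RealInnerProductSpace

lemma subgrad_strong_aux {p : ℕ} {f : EuclideanSpace ℝ (Fin p) → ℝ} {s : Set (EuclideanSpace ℝ (Fin p))}
    {rho : ℝ} (hsc : StrongConvexOn s rho f) {x y : EuclideanSpace ℝ (Fin p)}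
    (hx : x ∈ s) (hy : y ∈ s) (u : EuclideanSpace ℝ (Fin p))
    (hu : ∀ z, f x + ⟪u, z - x⟫ ≤ f z) :
    f x + ⟪u, y - x⟫ + rho / 2 * ‖y - x‖ ^ 2 ≤ f y := by
  have key : ∀ t ∈ Set.Ioo (0:ℝ) 1,
      f x + ⟪u, y - x⟫ + (1 - t) * (rho / 2 * ‖y - x‖ ^ 2) ≤ f y := by
    intro t ht
    obtain ⟨ht0, ht1⟩ := ht
    have hab : (1 - t) + t = 1 := by ring
    have hc := hsc.2 hx hy (by linarith) (le_of_lt ht0) hab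
    have hz := hu ((1 - t) • x + t • y)
    have hpt : (1 - t) • x + t • y - x = t • (y - x) := by
      module
    rw [hpt, real_inner_smul_right] at hz
    simp only [smul_eq_mul] at hc
    rw [norm_sub_rev x y] at hc
    nlinarith [hc, hz]
  have hne : (nhdsWithin (0:ℝ) (Set.Ioo 0 1)).NeBot := by
    refine mem_closure_iff_nhdsWithin_neBot.mp ?_
    rw [closure_Ioo (by norm_num : (0:ℝ) ≠ 1)]
    exact ⟨le_refl _, by norm_num⟩
  have htend : Filter.Tendsto (fun t : ℝ => f x + ⟪u, y - x⟫ + (1 - t) * (rho / 2 * ‖y - x‖ ^ 2))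
      (nhdsWithin (0:ℝ) (Set.Ioo 0 1)) (nhds (f x + ⟪u, y - x⟫ + rho / 2 * ‖y - x‖ ^ 2)) := by
    have : Filter.Tendsto (fun t : ℝ => f x + ⟪u, y - x⟫ + (1 - t) * (rho / 2 * ‖y - x‖ ^ 2))
        (nhds 0) (nhds (f x + ⟪u, y - x⟫ + (1 - 0) * (rho / 2 * ‖y - x‖ ^ 2))) := by
      apply Filter.Tendsto.add tendsto_const_nhds
      exact (Filter.Tendsto.sub tendsto_const_nhds Filter.tendsto_id).mul tendsto_const_nhds
    simp only [sub_zero, one_mul] at this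
    exact this.mono_left nhdsWithin_le_nhds
  exact le_of_tendsto htend (Filter.eventually_of_mem self_mem_nhdsWithin key)

/-- Contraction of the proximal point towards the minimizer under strong convexity. -/
theorem prox_contraction_strongly_convex {p : ℕ}
    (f : EuclideanSpace ℝ (Fin p) → ℝ) (hconv : ConvexOn ℝ Set.univ f)
    (rho lam R : ℝ) (hrho : 0 < rho) (hlam : 0 < lam) (hR : 0 < R)
    (thetaHat thetaT thetaPlus : EuclideanSpace ℝ (Fin p))
    (hsc : StrongConvexOn (Metric.closedBall thetaHat R) rho f)
    (hHat_mem : thetaHat ∈ Metric.closedBall thetaHat R)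
    (hPlus_mem : thetaPlus ∈ Metric.closedBall thetaHat R)
    -- θ̂ is the global minimizer (first-order condition 0 ∈ ∂f(θ̂))
    (hmin : ∀ x, f thetaHat ≤ f x)
    -- θ⁺ = prox_{λ⁻¹ f}(θ_t): first-order condition −λ(θ⁺ − θ_t) ∈ ∂f(θ⁺)
    (hsub : ∀ x, f thetaPlus + ⟪(-lam) • (thetaPlus - thetaT), x - thetaPlus⟫ ≤ f x)
    (hprox : ∀ x, f thetaPlus + lam / 2 * ‖thetaPlus - thetaT‖ ^ 2 ≤
      f x + lam / 2 * ‖x - thetaT‖ ^ 2) :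
    ‖thetaPlus - thetaHat‖ ≤ lam / (rho + lam) * ‖thetaT - thetaHat‖ := by
  have hu0 : ∀ z, f thetaHat + ⟪(0 : EuclideanSpace ℝ (Fin p)), z - thetaHat⟫ ≤ f z := by
    intro z; simpa using hmin z
  have h1 := subgrad_strong_aux hsc hHat_mem hPlus_mem 0 hu0
  have h2 := subgrad_strong_aux hsc hPlus_mem hHat_mem ((-lam) • (thetaPlus - thetaT)) hsub
  simp only [inner_zero_left] at h1
  have hinner : ⟪(-lam) • (thetaPlus - thetaT), thetaHat - thetaPlus⟫ =
      lam * ‖thetaPlus - thetaHat‖ ^ 2 - lam * ⟪thetaT - thetaHat, thetaPlus - thetaHat⟫ := by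
    rw [real_inner_smul_left]
    have : thetaPlus - thetaT = (thetaPlus - thetaHat) - (thetaT - thetaHat) := by module
    rw [this]
    have h2' : thetaHat - thetaPlus = -(thetaPlus - thetaHat) := by module
    rw [h2']
    rw [inner_sub_left, inner_neg_right, inner_neg_right,
      real_inner_self_eq_norm_sq]
    ring
  rw [hinner] at h2
  rw [norm_sub_rev thetaHat thetaPlus] at h2
  have hcs : ⟪thetaT - thetaHat, thetaPlus - thetaHat⟫ ≤ ‖thetaT - thetaHat‖ * ‖thetaPlus - thetaHat‖ :=
    real_inner_le_norm _ _
  have hkey : (rho + lam) * ‖thetaPlus - thetaHat‖ ^ 2 ≤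
      lam * (‖thetaT - thetaHat‖ * ‖thetaPlus - thetaHat‖) := by
    nlinarith [h1, h2, hcs]
  rcases eq_or_lt_of_le (norm_nonneg (thetaPlus - thetaHat)) with h0 | h0
  · rw [← h0]
    positivity
  · rw [div_mul_eq_mul_div, le_div_iff₀ (by linarith)]
    nlinarith [hkey, h0]
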